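/- Let n = 2m+1, R = ℂ[α,δ₁,…,δ_n]/(δ₁²,…,δ_n²), and suppose s ≥ m. Let 𝔞 be the ideal of R generated by α^s and all its images under even flip symmetries τ_J (|J| even). Then every homogeneous element f ∈ R of degree strictly greater than 2s (with deg α = deg δ_i = 2) lies in 𝔞. -/

import Mathlib

/-!
STATEMENT 10: Let `n = 2m+1`, `R = ℂ[α,δ₁,…,δ_n]/(δ₁²,…,δ_n²)`, and `s ≥ m`.
Let `𝔞` be the ideal of `R` generated by (the images of) `τ_J(α^s)` for all even
flip symmetries `τ_J` (`|J|` even).  Then every homogeneous element of `R` of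
(weighted) degree strictly greater than `2s` — with `deg α = deg δ_i = 2` — lies
in `𝔞`.  Homogeneous elements of `R` are images of weighted-homogeneous polynomials.
Variables: `X none = α`, `X (some i) = δ_i` in `MvPolynomial (Option (Fin n)) ℂ`.
-/

open MvPolynomial

/-- The flip symmetry `τ_J`: fixes `ω = α + (Σ δ_i)/2`, negates `δ_i` for `i ∈ J`. -/
noncomputable def Stmt10.tau {n : ℕ} (J : Finset (Fin n)) :
    MvPolynomial (Option (Fin n)) ℂ →ₐ[ℂ] MvPolynomial (Option (Fin n)) ℂ :=
  MvPolynomial.aeval fun v =>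
    match v with
    | none => X none + ∑ j ∈ J, X (some j)
    | some i => if i ∈ J then -X (some i) else X (some i)

/-- The ideal `(δ₁²,…,δ_n²)`. -/
noncomputable def Stmt10.sqIdeal (n : ℕ) : Ideal (MvPolynomial (Option (Fin n)) ℂ) :=
  Ideal.span (Set.range fun i : Fin n => (X (some i) : MvPolynomial (Option (Fin n)) ℂ) ^ 2)

section aux
variable {Q : Type*} [CommRing Q]

lemma sq_zero_pow_succ {c : Q} (hc : c ^ 2 = 0) (b : Q) :
    ∀ t : ℕ, (b + c) ^ (t + 1) = b ^ (t + 1) + (t + 1 : ℕ) * c * b ^ t := by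
  intro t
  induction t with
  | zero => push_cast; ring
  | succ t ih =>
      have h : (b + c) ^ (t + 2) = (b + c) ^ (t + 1) * (b + c) := by ring
      rw [h, ih]
      push_cast
      linear_combination (↑t + 1) * b ^ t * hc

lemma sq_zero_pow {c : Q} (hc : c ^ 2 = 0) (b : Q) (t : ℕ) :
    (b + c) ^ t = b ^ t + (t : ℕ) * c * b ^ (t - 1) := by
  cases t with
  | zero => simp
  | succ t => simpa using sq_zero_pow_succ hc b t

lemma sq_zero_mul_pow {c : Q} (hc : c ^ 2 = 0) (b : Q) (t : ℕ) :
    c * (b + c) ^ t = c * b ^ t := by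
  rw [sq_zero_pow hc b t]
  ring_nf
  rw [hc]
  ring

variable {ι : Type*} [DecidableEq ι]

lemma incl_excl (a : Q) (dd : ι → Q) (hdd : ∀ i, dd i ^ 2 = 0) (K : Finset ι) :
    ∀ t : ℕ, ∑ J ∈ K.powerset, (-1 : Q) ^ J.card * (a + ∑ j ∈ J, dd j) ^ t
      = (-1 : Q) ^ K.card * (t.descFactorial K.card : Q) * (∏ j ∈ K, dd j) * a ^ (t - K.card) := by
  induction K using Finset.induction with
  | empty => intro t; simp
  | @insert i K hiK ih =>
      intro t
      rw [Finset.sum_powerset_insert hiK, ih t]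
      have hstep : ∀ J ∈ K.powerset,
          (-1 : Q) ^ (insert i J).card * (a + ∑ j ∈ insert i J, dd j) ^ t
          = -((-1 : Q) ^ J.card * ((a + ∑ j ∈ J, dd j) ^ t
              + (t : Q) * dd i * (a + ∑ j ∈ J, dd j) ^ (t - 1))) := by
        intro J hJ
        have hiJ : i ∉ J := fun h => hiK (Finset.mem_powerset.mp hJ h)
        rw [Finset.card_insert_of_notMem hiJ, Finset.sum_insert hiJ,
          show a + (dd i + ∑ j ∈ J, dd j) = (a + ∑ j ∈ J, dd j) + dd i by ring,
          sq_zero_pow (hdd i)]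
        ring
      rw [Finset.sum_congr rfl hstep]
      have hsplit : ∑ J ∈ K.powerset, -((-1 : Q) ^ J.card * ((a + ∑ j ∈ J, dd j) ^ t
              + (t : Q) * dd i * (a + ∑ j ∈ J, dd j) ^ (t - 1)))
          = -(∑ J ∈ K.powerset, (-1 : Q) ^ J.card * (a + ∑ j ∈ J, dd j) ^ t)
            - (t : Q) * dd i * ∑ J ∈ K.powerset, (-1 : Q) ^ J.card * (a + ∑ j ∈ J, dd j) ^ (t - 1) := by
        rw [← Finset.sum_neg_distrib, Finset.mul_sum, ← Finset.sum_sub_distrib]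
        apply Finset.sum_congr rfl; intro J hJ; ring
      rw [hsplit, ih t, ih (t - 1)]
      have hnat : (t : Q) * ((t - 1).descFactorial K.card : Q)
          = (t.descFactorial (K.card + 1) : Q) := by
        rw [← Nat.cast_mul]
        congr 1
        cases t with
        | zero => simp
        | succ t => rw [Nat.succ_sub_one]; exact (Nat.succ_descFactorial_succ t K.card).symm
      rw [Finset.card_insert_of_notMem hiK, Finset.prod_insert hiK,
        show t - 1 - K.card = t - (K.card + 1) by omega]
      rw [show ((t:Q) * dd i * ((-1 : Q) ^ K.card * ((t - 1).descFactorial K.card : Q) * (∏ j ∈ K, dd j) * a ^ (t - (K.card+1)))) = ((t:Q) * ((t - 1).descFactorial K.card : Q)) * ((-1:Q)^K.card * dd i * (∏ j ∈ K, dd j) * a ^ (t - (K.card+1))) by ring, hnat]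
      ring
end aux

namespace Stmt10
variable {n : ℕ}

lemma dd_sq (i : Fin n) : (Ideal.Quotient.mk (sqIdeal n) (X (some i))) ^ 2 = 0 := by
  rw [← map_pow, Ideal.Quotient.eq_zero_iff_mem]
  exact Ideal.subset_span ⟨i, rfl⟩

lemma tau_X_none (J : Finset (Fin n)) :
    (tau J) (X none : MvPolynomial (Option (Fin n)) ℂ) = X none + ∑ j ∈ J, X (some j) := by
  simp [tau]

lemma mk_tau (J : Finset (Fin n)) (t : ℕ) :
    Ideal.Quotient.mk (sqIdeal n) ((tau J) ((X none : MvPolynomial (Option (Fin n)) ℂ) ^ t))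
      = (Ideal.Quotient.mk (sqIdeal n) (X none)
          + ∑ j ∈ J, Ideal.Quotient.mk (sqIdeal n) (X (some j))) ^ t := by
  rw [map_pow, tau_X_none]; rw [map_pow, map_add, map_sum]

/-- the ideal generated by the even-flip images of `α^s` in the quotient. -/
noncomputable def agoal (n s : ℕ) : Ideal (MvPolynomial (Option (Fin n)) ℂ ⧸ sqIdeal n) :=
  Ideal.span ((fun J : Finset (Fin n) =>
        Ideal.Quotient.mk (sqIdeal n)
          (tau J ((X none : MvPolynomial (Option (Fin n)) ℂ) ^ s))) ''
        {J | Even J.card})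

lemma gen_mem {s : ℕ} {J : Finset (Fin n)} (hJ : Even J.card) :
    (Ideal.Quotient.mk (sqIdeal n) (X none)
      + ∑ j ∈ J, Ideal.Quotient.mk (sqIdeal n) (X (some j))) ^ s ∈ agoal n s := by
  rw [← mk_tau]
  exact Ideal.subset_span ⟨J, hJ, rfl⟩

set_option maxHeartbeats 1000000 in
lemma exact_core (s : ℕ) (K : Finset (Fin n)) (hK : K.card ≤ s + 1) :
    Ideal.Quotient.mk (sqIdeal n) (X none) ^ (s + 1 - K.card)
      * ∏ i ∈ K, Ideal.Quotient.mk (sqIdeal n) (X (some i)) ∈ agoal n s := by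
  set a := Ideal.Quotient.mk (sqIdeal n) (X (none : Option (Fin n))) with ha
  set dd := fun i : Fin n => Ideal.Quotient.mk (sqIdeal n) (X (some i)) with hdd
  rcases K.eq_empty_or_nonempty with rfl | ⟨i, hi⟩
  · simp only [Finset.card_empty, Nat.sub_zero, Finset.prod_empty, mul_one]
    have h1 : a ^ (s + 1) = a * a ^ s := by ring
    rw [h1]
    refine Ideal.mul_mem_left _ _ ?_
    have := gen_mem (n := n) (s := s) (J := ∅) (by simp)
    simpa using this
  · set K' := K.erase i with hK'
    have hK'card : K'.card = K.card - 1 := Finset.card_erase_of_mem hi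
    have hpos : 1 ≤ K.card := Finset.card_pos.mpr ⟨i, hi⟩
    have hk'le : K'.card ≤ s := by omega
    have key := incl_excl a dd dd_sq K' s
    have hmem : ∀ J ∈ K'.powerset, dd i * (a + ∑ j ∈ J, dd j) ^ s ∈ agoal n s := by
      intro J hJ
      have hiJ : i ∉ J := fun h =>
        (Finset.notMem_erase i K) (Finset.mem_powerset.mp hJ h)
      by_cases hEv : Even J.card
      · exact Ideal.mul_mem_left _ _ (gen_mem hEv)
      · have h1 : dd i * (a + ∑ j ∈ J, dd j) ^ s
            = dd i * ((a + ∑ j ∈ J, dd j) + dd i) ^ s :=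
          (sq_zero_mul_pow (dd_sq i) _ s).symm
        rw [h1, show (a + ∑ j ∈ J, dd j) + dd i = a + ∑ j ∈ insert i J, dd j by
          rw [Finset.sum_insert hiJ]; ring]
        refine Ideal.mul_mem_left _ _ (gen_mem ?_)
        rw [Finset.card_insert_of_notMem hiJ]
        exact Nat.even_add_one.mpr hEv
    have hcomb : (-1 : _) ^ K'.card * (dd i *
        ∑ J ∈ K'.powerset, (-1 : _) ^ J.card * (a + ∑ j ∈ J, dd j) ^ s) ∈ agoal n s := by
      refine Ideal.mul_mem_left _ _ ?_
      rw [Finset.mul_sum]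
      refine Ideal.sum_mem _ fun J hJ => ?_
      rw [show dd i * ((-1 : _) ^ J.card * (a + ∑ j ∈ J, dd j) ^ s)
          = (-1 : _) ^ J.card * (dd i * (a + ∑ j ∈ J, dd j) ^ s) by ring]
      exact Ideal.mul_mem_left _ _ (hmem J hJ)
    have hc0 : ((s.descFactorial K'.card : ℂ)) ≠ 0 := by
      rw [Nat.cast_ne_zero]
      intro h0
      exact absurd (Nat.descFactorial_eq_zero_iff_lt.mp h0) (by omega)
    have heq : (-1 : _) ^ K'.card * (dd i *
        ∑ J ∈ K'.powerset, (-1 : _) ^ J.card * (a + ∑ j ∈ J, dd j) ^ s)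
        = ((s.descFactorial K'.card : ℕ) : MvPolynomial (Option (Fin n)) ℂ ⧸ sqIdeal n) *
            (a ^ (s + 1 - K.card) * ∏ j ∈ K, dd j) := by
      have hprod : dd i * ∏ j ∈ K', dd j = ∏ j ∈ K, dd j :=
        Finset.mul_prod_erase K dd hi
      have hexp : s - K'.card = s + 1 - K.card := by omega
      have hsign : ((-1 : MvPolynomial (Option (Fin n)) ℂ ⧸ sqIdeal n) ^ K'.card)
          * ((-1) ^ K'.card) = 1 := by
        rw [← mul_pow]; norm_num
      rw [key, ← hprod, ← hexp]
      linear_combination (((s.descFactorial K'.card : ℕ) :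
          MvPolynomial (Option (Fin n)) ℂ ⧸ sqIdeal n) * dd i * (∏ j ∈ K', dd j)
          * a ^ (s - K'.card)) * hsign
    have hfin : a ^ (s + 1 - K.card) * ∏ j ∈ K, dd j
        = (algebraMap ℂ (MvPolynomial (Option (Fin n)) ℂ ⧸ sqIdeal n) ((s.descFactorial K'.card : ℂ))⁻¹) * ((-1 : _) ^ K'.card * (dd i *
            ∑ J ∈ K'.powerset, (-1 : _) ^ J.card * (a + ∑ j ∈ J, dd j) ^ s)) := by
      rw [heq, ← mul_assoc, ← map_natCast (algebraMap ℂ (MvPolynomial (Option (Fin n)) ℂ ⧸ sqIdeal n)),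
        ← map_mul, inv_mul_cancel₀ hc0, map_one, one_mul]
    rw [hfin]
    exact Ideal.mul_mem_left _ _ hcomb

end Stmt10

namespace Stmt10

lemma core (s u : ℕ) (K : Finset (Fin n)) (h : s + 1 ≤ u + K.card) :
    Ideal.Quotient.mk (sqIdeal n) (X none) ^ u
      * ∏ i ∈ K, Ideal.Quotient.mk (sqIdeal n) (X (some i)) ∈ agoal n s := by
  obtain ⟨K₀, hsub, hcard⟩ := Finset.exists_subset_card_eq (s := K) (n := min K.card (s + 1))
    (min_le_left _ _)
  have h₀ : K₀.card ≤ s + 1 := by omega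
  have hvu : s + 1 - K₀.card ≤ u := by omega
  have hsplit : Ideal.Quotient.mk (sqIdeal n) (X none) ^ u
        * ∏ i ∈ K, Ideal.Quotient.mk (sqIdeal n) (X (some i))
      = (Ideal.Quotient.mk (sqIdeal n) (X none) ^ (u - (s + 1 - K₀.card))
          * ∏ i ∈ K \ K₀, Ideal.Quotient.mk (sqIdeal n) (X (some i)))
        * (Ideal.Quotient.mk (sqIdeal n) (X none) ^ (s + 1 - K₀.card)
          * ∏ i ∈ K₀, Ideal.Quotient.mk (sqIdeal n) (X (some i))) := by
    rw [show (Ideal.Quotient.mk (sqIdeal n) (X none) ^ (u - (s + 1 - K₀.card))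
          * ∏ i ∈ K \ K₀, Ideal.Quotient.mk (sqIdeal n) (X (some i)))
        * (Ideal.Quotient.mk (sqIdeal n) (X none) ^ (s + 1 - K₀.card)
          * ∏ i ∈ K₀, Ideal.Quotient.mk (sqIdeal n) (X (some i)))
      = (Ideal.Quotient.mk (sqIdeal n) (X none) ^ (u - (s + 1 - K₀.card))
          * Ideal.Quotient.mk (sqIdeal n) (X none) ^ (s + 1 - K₀.card))
        * ((∏ i ∈ K \ K₀, Ideal.Quotient.mk (sqIdeal n) (X (some i)))
          * ∏ i ∈ K₀, Ideal.Quotient.mk (sqIdeal n) (X (some i))) by ring,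
      ← pow_add, Finset.prod_sdiff hsub, Nat.sub_add_cancel hvu]
  rw [hsplit]
  exact Ideal.mul_mem_left _ _ (exact_core s K₀ h₀)

end Stmt10

namespace Stmt10

lemma monomial_single_sum (K : Finset (Fin n)) :
    (monomial (∑ i ∈ K, Finsupp.single (some i) (1 : ℕ)) (1 : ℂ)
        : MvPolynomial (Option (Fin n)) ℂ)
      = ∏ i ∈ K, X (some i) := by
  induction K using Finset.induction with
  | empty => simp [MvPolynomial.monomial_zero']
  | @insert i K hiK ih =>
      rw [Finset.sum_insert hiK, Finset.prod_insert hiK, ← ih, X,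
        MvPolynomial.monomial_mul, one_mul]

lemma single_sum_degree (K : Finset (Fin n)) :
    ((∑ i ∈ K, Finsupp.single (some i) (1 : ℕ)) :
      Option (Fin n) →₀ ℕ).sum (fun _ e => e) = K.card := by
  induction K using Finset.induction with
  | empty => simp
  | @insert i K hiK ih =>
      rw [Finset.sum_insert hiK,
        Finsupp.sum_add_index' (fun _ => rfl) (fun _ _ _ => rfl),
        Finsupp.sum_single_index rfl, ih, Finset.card_insert_of_notMem hiK]
      omega

lemma mono_mem (s : ℕ) (σ : Option (Fin n) →₀ ℕ)
    (hdeg : s + 1 ≤ σ.sum fun _ e => e) :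
    Ideal.Quotient.mk (sqIdeal n) (monomial σ (1 : ℂ)) ∈ agoal n s := by
  classical
  by_cases hsq : ∃ i : Fin n, 2 ≤ σ (some i)
  · obtain ⟨i, hi⟩ := hsq
    have hle : Finsupp.single (some i) 2 ≤ σ := by
      rw [Finsupp.single_le_iff]; exact hi
    have hrec : (σ - Finsupp.single (some i) 2) + Finsupp.single (some i) 2 = σ :=
      tsub_add_cancel_of_le hle
    have hmono : (monomial σ (1 : ℂ) : MvPolynomial (Option (Fin n)) ℂ)
        = monomial (σ - Finsupp.single (some i) 2) 1 * X (some i) ^ 2 := by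
      rw [X_pow_eq_monomial, MvPolynomial.monomial_mul, one_mul, hrec]
    rw [hmono, map_mul, map_pow]
    rw [show ((Ideal.Quotient.mk (sqIdeal n)) (X (some i))) ^ 2 = 0 from dd_sq i,
      mul_zero]
    exact Submodule.zero_mem _
  · push_neg at hsq
    set K : Finset (Fin n) := Finset.univ.filter (fun i => σ (some i) = 1) with hK
    have hσ : σ = Finsupp.single none (σ none)
        + ∑ i ∈ K, Finsupp.single (some i) (1 : ℕ) := by
      ext v
      rw [Finsupp.add_apply, Finsupp.finset_sum_apply]
      match v with
      | none =>
          simp [Finsupp.single_apply]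
      | some j =>
          rw [Finsupp.single_apply]
          simp only [if_neg (by simp : ¬ (none = some j))]
          rw [show (∑ i ∈ K, (Finsupp.single (some i) (1:ℕ)) (some j))
              = ∑ i ∈ K, if i = j then 1 else 0 by
            apply Finset.sum_congr rfl; intro i _
            rw [Finsupp.single_apply]
            simp,
            Finset.sum_ite_eq' K j (fun _ => 1)]
          by_cases hj : j ∈ K
          · rw [if_pos hj]
            have := (Finset.mem_filter.mp hj).2
            omega
          · rw [if_neg hj]
            have h1 : σ (some j) ≠ 1 := fun h =>
              hj (Finset.mem_filter.mpr ⟨Finset.mem_univ _, h⟩)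
            have := hsq j
            omega
    have hdeg' : s + 1 ≤ σ none + K.card := by
      rw [hσ, Finsupp.sum_add_index' (fun _ => rfl) (fun _ _ _ => rfl),
        Finsupp.sum_single_index rfl, single_sum_degree] at hdeg
      exact hdeg
    have hmono : (monomial σ (1 : ℂ) : MvPolynomial (Option (Fin n)) ℂ)
        = X none ^ (σ none) * ∏ i ∈ K, X (some i) := by
      conv_lhs => rw [hσ]
      rw [← monomial_single_sum, X_pow_eq_monomial, MvPolynomial.monomial_mul,
        one_mul]
    rw [hmono, map_mul, map_pow, map_prod]
    exact core s (σ none) K hdeg'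

end Stmt10

open Stmt10 in
theorem stmt10 (m n : ℕ) (hn : n = 2 * m + 1) (s : ℕ) (hs : m ≤ s)
    (d : ℕ) (hd : 2 * s < d)
    (F : MvPolynomial (Option (Fin n)) ℂ)
    (hF : F.IsWeightedHomogeneous (fun _ => 2) d) :
    Ideal.Quotient.mk (sqIdeal n) F ∈
      Ideal.span ((fun J : Finset (Fin n) =>
        Ideal.Quotient.mk (sqIdeal n)
          (tau J ((X none : MvPolynomial (Option (Fin n)) ℂ) ^ s))) ''
        {J | Even J.card}) := by
  show Ideal.Quotient.mk (sqIdeal n) F ∈ agoal n s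
  rw [← MvPolynomial.support_sum_monomial_coeff F, map_sum]
  refine Ideal.sum_mem _ fun σ hσ => ?_
  have hc := hF (MvPolynomial.mem_support_iff.mp hσ)
  rw [Finsupp.weight_apply] at hc
  have hc2 : (σ.sum fun _ c => c) * 2 = d := by
    rw [Finsupp.sum_mul]
    rw [← hc]
    apply Finsupp.sum_congr
    intro v _
    simp [smul_eq_mul]
  have hdeg : s + 1 ≤ σ.sum fun _ c => c := by omega
  have hmono : (monomial σ (coeff σ F) : MvPolynomial (Option (Fin n)) ℂ)
      = C (coeff σ F) * monomial σ 1 := by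
    rw [MvPolynomial.C_mul_monomial, mul_one]
  rw [hmono, map_mul]
  exact Ideal.mul_mem_left _ _ (mono_mem s σ hdeg)
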